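/- arXiv:2301.07730 — 2 statements merged into one kernel-verified Lean document; each statement's English description precedes it below -/
import Mathlib

section
/- Let m, d ≥ 1 be natural numbers and α ≥ 1 a real number. Let J₀ be a unitary on ℂ^m⊗ℂ^d, let e₀ ∈ ℂ^m be the first standard basis vector, and define W = α·(⟨e₀|⊗I_d)·J₀·(|e₀⟩⊗I_d) ∈ M_d(ℂ). Let Γ ⊆ ℂ^d be a subspace such that W†W·φ = φ for every φ ∈ Γ (i.e., W is an exact isometry on Γ). Set Π₀ = |e₀⟩⟨e₀|⊗I_d, L₀ = 2Π₀ − I, S₀ = −J₀·L₀·J₀†·L₀, and θ = arcsin(1/α). Then for every natural number ℓ and every unit vector φ ∈ Γ: ‖S₀^ℓ·J₀·(e₀⊗φ) − sin((2ℓ+1)θ)·(e₀⊗Wφ)‖ = |cos((2ℓ+1)θ)|, where ‖·‖ is the Euclidean norm. -/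
open scoped Matrix Kronecker ComplexOrder
open Matrix

/-- The operator (spectral) norm of a square complex matrix. -/
noncomputable def opNorm {n : Type*} [Fintype n] [DecidableEq n] (A : Matrix n n ℂ) : ℝ :=
  ‖Matrix.toEuclideanCLM (𝕜 := ℂ) A‖

/-- The square root of a positive semidefinite matrix (Mathlib's former `Matrix.PosSemidef.sqrt`). -/
noncomputable def Matrix.PosSemidef.sqrt {n 𝕜 : Type*} [Fintype n] [DecidableEq n] [RCLike 𝕜]
    {A : Matrix n n 𝕜} (hA : A.PosSemidef) : Matrix n n 𝕜 :=
  hA.1.eigenvectorUnitary.1 * Matrix.diagonal ((↑) ∘ (√·) ∘ hA.1.eigenvalues) *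
    (star hA.1.eigenvectorUnitary : Matrix n n 𝕜)

/-- The trace norm `‖A‖₁ = Tr √(Aᴴ A)` of a square complex matrix. -/
noncomputable def traceNorm {n : Type*} [Fintype n] [DecidableEq n] (A : Matrix n n ℂ) : ℝ :=
  ((Matrix.posSemidef_conjTranspose_mul_self A).sqrt.trace).re

/-- The (square-root) fidelity `F(ρ,σ) = ‖√ρ √σ‖₁` of positive semidefinite matrices. -/
noncomputable def fidelity {n : Type*} [Fintype n] [DecidableEq n] {ρ σ : Matrix n n ℂ}
    (hρ : ρ.PosSemidef) (hσ : σ.PosSemidef) : ℝ :=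
  traceNorm (hρ.sqrt * hσ.sqrt)

/-- Functional calculus for a Hermitian matrix: `f(A) = Σ_i f(λ_i) |v_i⟩⟨v_i|`. -/
noncomputable def matFun {n : Type*} [Fintype n] [DecidableEq n] {A : Matrix n n ℂ}
    (hA : A.IsHermitian) (f : ℝ → ℝ) : Matrix n n ℂ :=
  (hA.eigenvectorUnitary : Matrix n n ℂ) *
    Matrix.diagonal (fun i => (f (hA.eigenvalues i) : ℂ)) *
    (star (hA.eigenvectorUnitary : Matrix n n ℂ))

/-- Partial trace over the first tensor factor. -/
noncomputable def ptraceA {a b : Type*} [Fintype a] (X : Matrix (a × b) (a × b) ℂ) :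
    Matrix b b ℂ :=
  Matrix.of fun i j => ∑ k, X (k, i) (k, j)

/-- Partial trace over the second tensor factor. -/
noncomputable def ptraceB {a b : Type*} [Fintype b] (X : Matrix (a × b) (a × b) ℂ) :
    Matrix a a ℂ :=
  Matrix.of fun i j => ∑ k, X (i, k) (j, k)

/-- The outer product `|ψ⟩⟨φ|`. -/
def outer {a : Type*} (ψ φ : a → ℂ) : Matrix a a ℂ :=
  Matrix.of fun i j => ψ i * (starRingEnd ℂ) (φ j)

/-- The Euclidean norm of a finitely supported complex vector. -/
noncomputable def evnorm {a : Type*} [Fintype a] (v : a → ℂ) : ℝ :=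
  Real.sqrt (∑ i, ‖v i‖ ^ 2)

lemma star_dot_self {n : Type*} [Fintype n] (v : n → ℂ) :
    star v ⬝ᵥ v = ((∑ i, ‖v i‖^2 : ℝ) : ℂ) := by
  simp [dotProduct, Complex.mul_conj', ← Complex.normSq_eq_norm_sq,
    Complex.normSq_eq_conj_mul_self]

lemma evnorm_smul {n : Type*} [Fintype n] (v : n → ℂ) (t : ℝ) :
    evnorm ((t:ℂ) • v) = |t| * evnorm v := by
  unfold evnorm
  rw [← Real.sqrt_sq_eq_abs, ← Real.sqrt_mul (sq_nonneg t), Finset.mul_sum]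
  congr 1; apply Finset.sum_congr rfl; intro i _
  simp [norm_smul, mul_pow, Complex.norm_real]

lemma evnorm_sq_eq {n : Type*} [Fintype n] (v : n → ℂ) (r : ℝ)
    (h : star v ⬝ᵥ v = (r : ℂ)) : evnorm v = Real.sqrt r := by
  unfold evnorm
  rw [star_dot_self] at h
  exact congrArg Real.sqrt (by exact_mod_cast h)

lemma unitary_dot {n : Type*} [Fintype n] [DecidableEq n] (A : Matrix n n ℂ)
    (hA : A ∈ Matrix.unitaryGroup n ℂ) (x y : n → ℂ) :
    star (A *ᵥ x) ⬝ᵥ (A *ᵥ y) = star x ⬝ᵥ y := by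
  rw [Matrix.star_mulVec, ← Matrix.dotProduct_mulVec, Matrix.mulVec_mulVec,
    ← Matrix.star_eq_conjTranspose, (Matrix.mem_unitaryGroup_iff'.mp hA
      : star A * A = 1)]
  simp

/-- Exact oblivious amplitude amplification: if `J₀` is a unitary on `ℂ^m⊗ℂ^d` whose top-left
block (w.r.t. the ancilla state `e₀`), rescaled by `α`, is an exact isometry `W` on a subspace
`Γ`, then with `Pi₀ = |e₀⟩⟨e₀|⊗I`, `L₀ = 2Pi₀ − I`, `S₀ = −J₀L₀J₀†L₀` and `θ = arcsin(1/α)`, for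
every `ℓ` and unit `φ ∈ Γ`,
`‖S₀^ℓ J₀ (e₀⊗φ) − sin((2ℓ+1)θ)·(e₀⊗Wφ)‖ = |cos((2ℓ+1)θ)|`. -/
theorem exact_oblivious_amplitude_amplification (m d : ℕ) (hm : 0 < m) (hd : 0 < d)
    (α : ℝ) (hα : 1 ≤ α)
    (J₀ : Matrix (Fin m × Fin d) (Fin m × Fin d) ℂ)
    (hJ₀ : J₀ ∈ Matrix.unitaryGroup (Fin m × Fin d) ℂ)
    (W : Matrix (Fin d) (Fin d) ℂ)
    (hW : W = (α : ℂ) • Matrix.of (fun i j => J₀ (⟨0, hm⟩, i) (⟨0, hm⟩, j)))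
    (Γ : Submodule ℂ (Fin d → ℂ))
    (hΓ : ∀ φ ∈ Γ, (Wᴴ * W) *ᵥ φ = φ)
    (Pi₀ L₀ S₀ : Matrix (Fin m × Fin d) (Fin m × Fin d) ℂ)
    (hPi₀ : Pi₀ = Matrix.single (⟨0, hm⟩ : Fin m) (⟨0, hm⟩ : Fin m) (1 : ℂ)
      ⊗ₖ (1 : Matrix (Fin d) (Fin d) ℂ))
    (hL₀ : L₀ = (2 : ℂ) • Pi₀ - 1)
    (hS₀ : S₀ = -(J₀ * L₀ * J₀ᴴ * L₀))
    (θ : ℝ) (hθ : θ = Real.arcsin (1 / α))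
    (ℓ : ℕ) (φ : Fin d → ℂ) (hφΓ : φ ∈ Γ) (hφ : evnorm φ = 1) :
    evnorm ((S₀ ^ ℓ * J₀) *ᵥ (fun p : Fin m × Fin d => if p.1 = ⟨0, hm⟩ then φ p.2 else 0)
        - (Complex.ofReal (Real.sin (((2 * ℓ + 1 : ℕ) : ℝ) * θ))) •
            (fun p : Fin m × Fin d => if p.1 = ⟨0, hm⟩ then (W *ᵥ φ) p.2 else 0))
      = |Real.cos (((2 * ℓ + 1 : ℕ) : ℝ) * θ)| := by
  set e0 : Fin m := ⟨0, hm⟩ with he0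
  set ψ : Fin m × Fin d → ℂ := fun p => if p.1 = e0 then φ p.2 else 0 with hψdef
  set g : Fin m × Fin d → ℂ := fun p => if p.1 = e0 then (W *ᵥ φ) p.2 else 0 with hgdef
  have hα0 : (0:ℝ) < α := lt_of_lt_of_le one_pos hα
  have hαc : (α:ℂ) ≠ 0 := by exact_mod_cast hα0.ne'
  set s : ℝ := α⁻¹ with hsdef
  set sc : ℂ := ((s:ℝ) : ℂ) with hscdef
  have hsc : (α:ℂ)⁻¹ = sc := by rw [hscdef, hsdef]; push_cast; ring
  have hscα : sc * (α:ℂ) = 1 := by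
    rw [← hsc]; exact inv_mul_cancel₀ hαc
  have hsin : Real.sin θ = s := by
    have h1α : (0:ℝ) ≤ 1/α := by positivity
    rw [hθ, Real.sin_arcsin (by linarith) (by rw [div_le_one hα0]; exact hα), one_div]
  have h1 : ∀ x : Fin m × Fin d → ℂ, Pi₀ *ᵥ x
      = fun p => if p.1 = e0 then x (e0, p.2) else 0 := by
    intro x; funext p
    rcases p with ⟨i, j⟩
    rw [hPi₀]
    simp [Matrix.mulVec, dotProduct, Fintype.sum_prod_type,
      Matrix.single, Matrix.one_apply, ite_and, eq_comm]
  have hPψ : Pi₀ *ᵥ ψ = ψ := by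
    rw [h1]; funext p; by_cases h : p.1 = e0 <;> simp [hψdef, h]
  have hPg : Pi₀ *ᵥ g = g := by
    rw [h1]; funext p; by_cases h : p.1 = e0 <;> simp [hgdef, h]
  have hWφ : ∀ j, (W *ᵥ φ) j = (α:ℂ) * ∑ l, J₀ (e0, j) (e0, l) * φ l := by
    intro j
    simp only [hW, Matrix.mulVec, dotProduct, Matrix.smul_apply, Matrix.of_apply,
      smul_eq_mul, Finset.mul_sum, mul_assoc]
  have hJe : ∀ j, (J₀ *ᵥ ψ) (e0, j) = sc * (W *ᵥ φ) j := by
    intro j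
    rw [hWφ, ← mul_assoc, hscα, one_mul]
    simp [Matrix.mulVec, dotProduct, Fintype.sum_prod_type, hψdef, mul_ite]
  have hWW : Wᴴ *ᵥ (W *ᵥ φ) = φ := by rw [Matrix.mulVec_mulVec]; exact hΓ φ hφΓ
  have hWWj : ∀ j, (α:ℂ) * ∑ l, (starRingEnd ℂ) (J₀ (e0, l) (e0, j)) * (W *ᵥ φ) l = φ j := by
    intro j
    conv_rhs => rw [← hWW]
    simp only [Matrix.mulVec, dotProduct, Matrix.conjTranspose_apply, hW,
      Matrix.smul_apply, Matrix.of_apply, smul_eq_mul, _root_.map_mul, Complex.conj_ofReal,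
      Finset.mul_sum, mul_assoc]
    refine Finset.sum_congr rfl fun x _ => Finset.sum_congr rfl fun i _ => ?_
    simp only [Complex.star_def, _root_.map_mul, Complex.conj_ofReal]
    ring
  have hye : ∀ j, (J₀ᴴ *ᵥ g) (e0, j) = sc * φ j := by
    intro j
    rw [← hWWj j, ← mul_assoc, hscα, one_mul]
    simp [Matrix.mulVec, dotProduct, Matrix.conjTranspose_apply,
      Fintype.sum_prod_type, hgdef, mul_ite]
  have h3 : Pi₀ *ᵥ (J₀ *ᵥ ψ) = sc • g := by
    rw [h1]; funext p; by_cases h : p.1 = e0 <;> simp [hgdef, h, hJe]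
  have h4 : Pi₀ *ᵥ (J₀ᴴ *ᵥ g) = sc • ψ := by
    rw [h1]; funext p; by_cases h : p.1 = e0 <;> simp [hψdef, h, hye]
  have hU1 : J₀ᴴ * J₀ = 1 := by
    rw [← Matrix.star_eq_conjTranspose]; exact Matrix.mem_unitaryGroup_iff'.mp hJ₀
  have hU2 : J₀ * J₀ᴴ = 1 := by
    rw [← Matrix.star_eq_conjTranspose]; exact Matrix.mem_unitaryGroup_iff.mp hJ₀
  have h5 : ∀ x, J₀ *ᵥ (J₀ᴴ *ᵥ x) = x := by
    intro x; rw [Matrix.mulVec_mulVec, hU2, Matrix.one_mulVec]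
  have h6 : ∀ x, J₀ᴴ *ᵥ (J₀ *ᵥ x) = x := by
    intro x; rw [Matrix.mulVec_mulVec, hU1, Matrix.one_mulVec]
  have hLv : ∀ x, L₀ *ᵥ x = (2:ℂ) • (Pi₀ *ᵥ x) - x := by
    intro x
    rw [hL₀, Matrix.sub_mulVec, Matrix.smul_mulVec, Matrix.one_mulVec]
  have hSv : ∀ x, S₀ *ᵥ x = -(J₀ *ᵥ (L₀ *ᵥ (J₀ᴴ *ᵥ (L₀ *ᵥ x)))) := by
    intro x
    rw [hS₀, Matrix.neg_mulVec, Matrix.mulVec_mulVec, Matrix.mulVec_mulVec,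
      Matrix.mulVec_mulVec]
  have hSg : S₀ *ᵥ g = g - (2*sc) • (J₀ *ᵥ ψ) := by
    have e1 : L₀ *ᵥ g = g := by rw [hLv, hPg]; module
    have e2 : L₀ *ᵥ (J₀ᴴ *ᵥ g) = ((2:ℂ)*sc) • ψ - J₀ᴴ *ᵥ g := by rw [hLv, h4]; module
    rw [hSv, e1, e2, Matrix.mulVec_sub, Matrix.mulVec_smul, h5 g]
    module
  have hSJ : S₀ *ᵥ (J₀ *ᵥ ψ) = ((2:ℂ)*sc) • g + (1 - 4*sc^2) • (J₀ *ᵥ ψ) := by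
    have e1 : L₀ *ᵥ (J₀ *ᵥ ψ) = ((2:ℂ)*sc) • g - J₀ *ᵥ ψ := by rw [hLv, h3]; module
    have e2 : J₀ᴴ *ᵥ (((2:ℂ)*sc) • g - J₀ *ᵥ ψ) = ((2:ℂ)*sc) • (J₀ᴴ *ᵥ g) - ψ := by
      rw [Matrix.mulVec_sub, Matrix.mulVec_smul, h6 ψ]
    have e3 : L₀ *ᵥ (((2:ℂ)*sc) • (J₀ᴴ *ᵥ g) - ψ) = ((4:ℂ)*sc^2 - 1) • ψ - ((2:ℂ)*sc) • (J₀ᴴ *ᵥ g) := by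
      rw [hLv, Matrix.mulVec_sub, Matrix.mulVec_smul, h4, hPψ]
      module
    rw [hSv, e1, e2, e3, Matrix.mulVec_sub, Matrix.mulVec_smul, Matrix.mulVec_smul, h5 g]
    module
  have hpy : s^2 + Real.cos θ^2 = 1 := by rw [← hsin]; exact Real.sin_sq_add_cos_sq θ
  have key : ∀ k : ℕ, ∃ t : ℝ, Real.cos θ * t = Real.cos (((2*k+1 : ℕ) : ℝ) * θ) ∧
      (S₀ ^ k) *ᵥ (J₀ *ᵥ ψ)
        = ((Real.sin (((2*k+1:ℕ) : ℝ) * θ) : ℂ) - (t:ℂ) * sc) • g + ((t:ℂ)) • (J₀ *ᵥ ψ) := by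
    intro k
    induction k with
    | zero =>
      refine ⟨1, by norm_num, ?_⟩
      rw [pow_zero, Matrix.one_mulVec]
      have hs0 : ((Real.sin (((2*0+1:ℕ) : ℝ) * θ) : ℂ)) = sc := by
        norm_num [hsin, hscdef]
      rw [hs0]
      push_cast
      module
    | succ n ih =>
      obtain ⟨t, hct, hvec⟩ := ih
      refine ⟨-2*s*Real.sin (((2*n+1:ℕ) : ℝ)*θ) + (1-2*s^2)*t, ?_, ?_⟩
      · have hx : ((2*(n+1)+1:ℕ) : ℝ)*θ = ((2*n+1:ℕ) : ℝ)*θ + 2*θ := by push_cast; ring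
        rw [hx, Real.cos_add, Real.sin_two_mul, Real.cos_two_mul, hsin]
        linear_combination (-2*Real.cos θ*t)*hpy + (2*(Real.cos θ)^2-1)*hct
      · have ha' : Real.sin (((2*(n+1)+1:ℕ) : ℝ)*θ)
            = Real.sin (((2*n+1:ℕ) : ℝ)*θ)*(1-2*s^2) + 2*s*(1-s^2)*t := by
          have hx : ((2*(n+1)+1:ℕ) : ℝ)*θ = ((2*n+1:ℕ) : ℝ)*θ + 2*θ := by push_cast; ring
          rw [hx, Real.sin_add, Real.sin_two_mul, Real.cos_two_mul, hsin]
          linear_combination (2*Real.sin (((2*n+1:ℕ) : ℝ)*θ) + 2*s*t)*hpy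
            + (-2*s*Real.cos θ)*hct
        rw [pow_succ', ← Matrix.mulVec_mulVec, hvec, Matrix.mulVec_add,
          Matrix.mulVec_smul, Matrix.mulVec_smul, hSg, hSJ, ha']
        push_cast [hscdef]
        module
  have hφ2 : star φ ⬝ᵥ φ = (1:ℂ) := by
    rw [star_dot_self]
    have hS : (∑ i, ‖φ i‖^2 : ℝ) = 1 := by
      have := hφ; unfold evnorm at this
      nlinarith [Real.sq_sqrt (Finset.sum_nonneg fun i _ => sq_nonneg ‖φ i‖ : (0:ℝ) ≤ ∑ i, ‖φ i‖^2)]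
    rw [hS]; norm_num
  have ipWW : star (W *ᵥ φ) ⬝ᵥ (W *ᵥ φ) = 1 := by
    rw [Matrix.star_mulVec, ← Matrix.dotProduct_mulVec, hWW, hφ2]
  have ipψψ : star ψ ⬝ᵥ ψ = 1 := by
    rw [← hφ2]
    simp [dotProduct, Fintype.sum_prod_type, hψdef, apply_ite (starRingEnd ℂ),
      ite_mul, mul_ite]
  have ipJJ : star (J₀ *ᵥ ψ) ⬝ᵥ (J₀ *ᵥ ψ) = 1 := by
    rw [unitary_dot _ hJ₀]; exact ipψψ
  have ipgg : star g ⬝ᵥ g = 1 := by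
    rw [← ipWW]
    simp [dotProduct, Fintype.sum_prod_type, hgdef, apply_ite (starRingEnd ℂ),
      ite_mul, mul_ite]
  have hembdot : ∀ (v : Fin d → ℂ) (x : Fin m × Fin d → ℂ),
      star (fun p : Fin m × Fin d => if p.1 = e0 then v p.2 else 0) ⬝ᵥ x
        = ∑ j, (starRingEnd ℂ) (v j) * x (e0, j) := by
    intro v x
    rw [dotProduct, Fintype.sum_prod_type, Finset.sum_eq_single e0]
    · simp [Complex.star_def]
    · intro b _ hb; simp [hb]
    · intro h; exact absurd (Finset.mem_univ e0) h
  have hdotemb : ∀ (v : Fin d → ℂ) (x : Fin m × Fin d → ℂ),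
      star x ⬝ᵥ (fun p : Fin m × Fin d => if p.1 = e0 then v p.2 else 0)
        = ∑ j, (starRingEnd ℂ) (x (e0, j)) * v j := by
    intro v x
    rw [dotProduct, Fintype.sum_prod_type, Finset.sum_eq_single e0]
    · simp [Complex.star_def]
    · intro b _ hb; simp [hb]
    · intro h; exact absurd (Finset.mem_univ e0) h
  have ipgJ : star g ⬝ᵥ (J₀ *ᵥ ψ) = sc := by
    rw [hgdef, hembdot]
    simp only [hJe]
    have e : ∑ j, (starRingEnd ℂ) ((W *ᵥ φ) j) * (sc * (W *ᵥ φ) j)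
        = sc * (star (W *ᵥ φ) ⬝ᵥ (W *ᵥ φ)) := by
      rw [dotProduct, Finset.mul_sum]
      exact Finset.sum_congr rfl fun j _ => by simp [Complex.star_def]; ring
    rw [e, ipWW, mul_one]
  have ipJg : star (J₀ *ᵥ ψ) ⬝ᵥ g = sc := by
    rw [hgdef, hdotemb]
    simp only [hJe, _root_.map_mul]
    have e : ∑ j, (starRingEnd ℂ) sc * (starRingEnd ℂ) ((W *ᵥ φ) j) * (W *ᵥ φ) j
        = (starRingEnd ℂ) sc * (star (W *ᵥ φ) ⬝ᵥ (W *ᵥ φ)) := by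
      rw [dotProduct, Finset.mul_sum]
      exact Finset.sum_congr rfl fun j _ => by simp [Complex.star_def]; ring
    rw [e, ipWW, mul_one, hscdef, Complex.conj_ofReal]
  have bb : star ((J₀ *ᵥ ψ) - sc • g) ⬝ᵥ ((J₀ *ᵥ ψ) - sc • g) = ((1 - s^2 : ℝ) : ℂ) := by
    rw [star_sub, star_smul, sub_dotProduct, dotProduct_sub,
      dotProduct_sub, smul_dotProduct, smul_dotProduct,
      dotProduct_smul, dotProduct_smul, ipJJ, ipgg, ipgJ, ipJg]
    simp only [hscdef, Complex.star_def, Complex.conj_ofReal, smul_eq_mul]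
    push_cast
    ring
  have hcos : Real.cos θ = Real.sqrt (1 - s^2) := by
    rw [hθ, Real.cos_arcsin, one_div, hsdef]
  have evb : evnorm ((J₀ *ᵥ ψ) - sc • g) = Real.cos θ := by
    rw [evnorm_sq_eq _ (1 - s^2) bb, hcos]
  obtain ⟨t, hct, hvec⟩ := key ℓ
  have hmv : (S₀ ^ ℓ * J₀) *ᵥ ψ = (S₀ ^ ℓ) *ᵥ (J₀ *ᵥ ψ) := (Matrix.mulVec_mulVec _ _ _).symm
  rw [hmv, hvec]
  have hcol : ((Real.sin (((2*ℓ+1:ℕ) : ℝ) * θ) : ℂ) - (t:ℂ) * sc) • g + ((t:ℂ)) • (J₀ *ᵥ ψ)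
      - (Complex.ofReal (Real.sin (((2 * ℓ + 1 : ℕ) : ℝ) * θ))) • g
      = (t:ℂ) • ((J₀ *ᵥ ψ) - sc • g) := by
    module
  rw [hcol, evnorm_smul, evb, ← hct, abs_mul,
    abs_of_nonneg (show (0:ℝ) ≤ Real.cos θ from by rw [hcos]; exact Real.sqrt_nonneg _),
    mul_comm]
end

section
/- For every natural number D ≥ 1 and every D×D complex matrix A all of whose entries satisfy |A_{ij}| ≤ 1, there exists a unitary U on ℂ^D⊗ℂ^D⊗ℂ² such that for all i, j ∈ {1, …, D}: ⟨e_i⊗e₁⊗e₁, U·(e_j⊗e₁⊗e₁)⟩ = A_{ij}/D, where e_k denotes the k-th standard basis vector of the respective space. Equivalently, D·(I_D⊗⟨e₁⊗e₁|)·U·(I_D⊗|e₁⊗e₁⟩) = A, i.e., every matrix with entries of magnitude at most 1 admits an exact unitary block encoding with post-selection factor D using one ancilla register of dimension D and one ancilla qubit. -/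
open scoped Matrix Kronecker ComplexOrder

/-- There is a `D×D` unitary whose first column is constantly `1/√D`. -/
lemma exists_F_aux (D : ℕ) (hD : 0 < D) :
    ∃ F : Matrix (Fin D) (Fin D) ℂ, F ∈ Matrix.unitaryGroup (Fin D) ℂ ∧
      ∀ k, F k ⟨0, hD⟩ = (((Real.sqrt D)⁻¹ : ℝ) : ℂ) := by
  set c : ℂ := (((Real.sqrt D)⁻¹ : ℝ) : ℂ) with hc
  have hcc : (starRingEnd ℂ) c * c = (D : ℂ)⁻¹ := by
    rw [hc, Complex.conj_ofReal, ← Complex.ofReal_mul]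
    rw [← Real.sqrt_inv, Real.mul_self_sqrt (by positivity)]
    simp
  set v : Fin D → EuclideanSpace ℂ (Fin D) := fun _ => WithLp.toLp 2 (fun _ => c) with hv
  have hvo : Orthonormal ℂ ((Set.restrict {(⟨0,hD⟩ : Fin D)} v)) := by
    rw [orthonormal_iff_ite]
    rintro ⟨i, hi⟩ ⟨j, hj⟩
    simp only [Set.mem_singleton_iff] at hi hj
    subst hi; subst hj
    simp only [Set.restrict_apply, if_pos rfl]
    rw [PiLp.inner_apply]
    simp only [hv, Set.restrict, Set.domRestrict, WithLp.ofLp_toLp, Finset.sum_const, Finset.card_univ, Fintype.card_fin, nsmul_eq_mul]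
    rw [if_pos trivial, RCLike.inner_apply', hcc, mul_inv_cancel₀ (by exact_mod_cast hD.ne')]
  obtain ⟨b, hb⟩ := hvo.exists_orthonormalBasis_extension_of_card_eq
    (by simp [finrank_euclideanSpace])
  refine ⟨Matrix.of fun k l => b l k, ?_, ?_⟩
  · rw [Matrix.mem_unitaryGroup_iff']
    ext l l'
    have := (orthonormal_iff_ite.mp b.orthonormal) l l'
    rw [PiLp.inner_apply] at this
    simpa [Matrix.mul_apply, Matrix.one_apply, mul_comm] using this
  · intro k
    have := hb ⟨0, hD⟩ rfl
    simp [Matrix.of_apply, this, hv]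

/-- There is a `2×2` unitary with prescribed `(0,0)` entry of modulus at most `1`. -/
lemma exists_R_aux (a : ℂ) (ha : ‖a‖ ≤ 1) :
    ∃ R : Matrix (Fin 2) (Fin 2) ℂ, R ∈ Matrix.unitaryGroup (Fin 2) ℂ ∧ R 0 0 = a := by
  obtain ⟨b, hb⟩ : ∃ b : ℝ, (b : ℂ) * b = 1 - (starRingEnd ℂ) a * a := by
    refine ⟨Real.sqrt (1 - ‖a‖ ^ 2), ?_⟩
    rw [← Complex.ofReal_mul,
      Real.mul_self_sqrt (by nlinarith [norm_nonneg a]), Complex.conj_mul']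
    push_cast
    norm_cast
  refine ⟨!![a, -(b : ℂ); (b : ℂ), (starRingEnd ℂ) a], ?_, by simp⟩
  rw [Matrix.mem_unitaryGroup_iff']
  ext i j
  fin_cases i <;> fin_cases j <;>
    simp [Matrix.mul_apply, Fin.sum_univ_two, Matrix.one_apply, Complex.conj_ofReal]
  all_goals try ring
  all_goals linear_combination hb

/-- Every `D×D` matrix with entries of magnitude at most `1` admits an exact unitary block
encoding with post-selection factor `D`, using one ancilla register of dimension `D` and one
ancilla qubit: there is a unitary `U` on `ℂ^D⊗ℂ^D⊗ℂ²` with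
`⟨e_i⊗e₁⊗e₁, U (e_j⊗e₁⊗e₁)⟩ = A_{ij}/D`. -/
theorem block_encoding_of_bounded_entries (D : ℕ) (hD : 0 < D)
    (A : Matrix (Fin D) (Fin D) ℂ) (hA : ∀ i j, ‖A i j‖ ≤ 1) :
    ∃ U ∈ Matrix.unitaryGroup (Fin D × Fin D × Fin 2) ℂ,
      ∀ i j : Fin D,
        U (i, (⟨0, hD⟩ : Fin D), (0 : Fin 2)) (j, (⟨0, hD⟩ : Fin D), (0 : Fin 2))
          = A i j / D := by
  obtain ⟨F, hF, hF0⟩ := exists_F_aux D hD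
  choose R hR hR0 using fun j k => exists_R_aux (A k j) (hA k j)
  have hFU : star F * F = 1 := Matrix.mem_unitaryGroup_iff'.mp hF
  have hRU : ∀ j k, star (R j k) * R j k = 1 :=
    fun j k => Matrix.mem_unitaryGroup_iff'.mp (hR j k)
  -- the "diffusion" unitary  I ⊗ F ⊗ I
  let W : Matrix (Fin D × Fin D × Fin 2) (Fin D × Fin D × Fin 2) ℂ := Matrix.of fun x y =>
    if x.1 = y.1 ∧ x.2.2 = y.2.2 then F x.2.1 y.2.1 else 0
  -- the "swap then select-rotate" unitary
  let P : Matrix (Fin D × Fin D × Fin 2) (Fin D × Fin D × Fin 2) ℂ := Matrix.of fun x y =>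
    if x.2.1 = y.1 ∧ x.1 = y.2.1 then R x.2.1 x.1 x.2.2 y.2.2 else 0
  have hW : W ∈ Matrix.unitaryGroup (Fin D × Fin D × Fin 2) ℂ := by
    rw [Matrix.mem_unitaryGroup_iff']
    ext ⟨c, d, t⟩ ⟨c', d', t'⟩
    show ∑ x : Fin D × Fin D × Fin 2, star (W x (c, d, t)) * W x (c', d', t') = _
    simp only [W, Matrix.of_apply, Fintype.sum_prod_type,
      apply_ite (star · : ℂ → ℂ), star_zero, ite_and, ite_mul, zero_mul, mul_ite,
      mul_zero, Finset.sum_ite_irrel, Finset.sum_const_zero, Finset.sum_ite_eq,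
      Finset.sum_ite_eq', Finset.mem_univ, if_true, Matrix.one_apply, Prod.ext_iff]
    have h2 : ∑ b, star (F b d) * F b d' = if d = d' then 1 else 0 := by
      rw [← Matrix.one_apply (i := d) (j := d'), ← hFU, Matrix.mul_apply]
      rfl
    by_cases hc : c = c' <;> by_cases ht : t = t' <;>
      simp [hc, ht, eq_comm, ← h2, Complex.star_def]
  have hP : P ∈ Matrix.unitaryGroup (Fin D × Fin D × Fin 2) ℂ := by
    rw [Matrix.mem_unitaryGroup_iff']
    ext ⟨c, d, t⟩ ⟨c', d', t'⟩
    show ∑ x : Fin D × Fin D × Fin 2, star (P x (c, d, t)) * P x (c', d', t') = _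
    simp only [P, Matrix.of_apply, Fintype.sum_prod_type,
      apply_ite (star · : ℂ → ℂ), star_zero, ite_and, ite_mul, zero_mul, mul_ite,
      mul_zero, Finset.sum_ite_irrel, Finset.sum_const_zero, Finset.sum_ite_eq,
      Finset.sum_ite_eq', Finset.mem_univ, if_true, Matrix.one_apply, Prod.ext_iff]
    have h2 : ∑ s, star (R c d s t) * R c d s t' = if t = t' then 1 else 0 := by
      rw [← Matrix.one_apply (i := t) (j := t'), ← hRU c d, Matrix.mul_apply]
      rfl
    by_cases hc : c = c' <;> by_cases hd : d = d' <;>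
      simp [hc, hd, eq_comm, ← h2, Complex.star_def]
  refine ⟨star W * P * W, mul_mem (mul_mem (Unitary.star_mem hW) hP) hW, ?_⟩
  intro i j
  show ∑ x : Fin D × Fin D × Fin 2,
      (∑ y : Fin D × Fin D × Fin 2, star (W y (i, ⟨0, hD⟩, 0)) * P y x) *
        W x (j, ⟨0, hD⟩, 0) = A i j / D
  simp only [W, P, Matrix.of_apply, Fintype.sum_prod_type,
    apply_ite (star · : ℂ → ℂ), star_zero, ite_and, ite_mul, zero_mul, mul_ite,
    mul_zero, Finset.sum_ite_irrel, Finset.sum_const_zero, Finset.sum_ite_eq,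
    Finset.sum_ite_eq', Finset.mem_univ, if_true, hF0, hR0]
  rw [Complex.star_def, Complex.conj_ofReal]
  rw [eq_div_iff (by exact_mod_cast hD.ne' : (D:ℂ) ≠ 0)]
  have : (Complex.ofReal ((Real.sqrt D)⁻¹)) * (Complex.ofReal ((Real.sqrt D)⁻¹)) * (D : ℂ)
      = 1 := by
    rw [← Complex.ofReal_mul, ← Real.sqrt_inv,
      Real.mul_self_sqrt (by positivity)]
    rw [← Complex.ofReal_natCast, ← Complex.ofReal_mul,
      inv_mul_cancel₀ (by exact_mod_cast hD.ne')]
    simp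
  linear_combination A i j * this
end
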